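/- Let β > 0 be irrational. For b > 0 let μ_b denote the pushforward of the uniform probability distribution on [0,b] under the map x ↦ 3 + 2(cos x + cos(βx) + cos((1+β)x)), and let ν denote the pushforward of the uniform probability distribution on [0,2π]³ under the map (φ₁,φ₂,φ₃) ↦ |e^{iφ₁} + e^{iφ₂} + e^{iφ₃}|². Then μ_b converges weakly to ν as b → ∞; i.e., for every bounded continuous function f : ℝ → ℝ, (1/b)∫₀^b f(3 + 2(cos x + cos(βx) + cos((1+β)x))) dx → (1/(2π)³)∫_{[0,2π]³} f(|e^{iφ₁}+e^{iφ₂}+e^{iφ₃}|²) dφ as b → ∞. -/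

import Mathlib

open Real Filter

namespace WeakConvAuxT

open MeasureTheory intervalIntegral Submodule Set AddCircle Complex

local instance fact2pi : Fact ((0:ℝ) < 2 * Real.pi) := ⟨by positivity⟩

abbrev Cir : Type := AddCircle (2 * Real.pi)
abbrev Tor : Type := Cir × Cir

noncomputable def μ2 : Measure Tor :=
  (haarAddCircle : Measure Cir).prod haarAddCircle

instance : IsProbabilityMeasure μ2 := by
  unfold μ2; infer_instance

/-- Characters of the 2-torus. -/
noncomputable def eChar (m n : ℤ) : C(Tor, ℂ) :=
  ((fourier m).comp ⟨Prod.fst, continuous_fst⟩) *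
    ((fourier n).comp ⟨Prod.snd, continuous_snd⟩)

lemma eChar_apply (m n : ℤ) (p : Tor) :
    eChar m n p = fourier m p.1 * fourier n p.2 := rfl

lemma integral_fourier (n : ℤ) :
    (∫ t : Cir, fourier n t ∂haarAddCircle) = if n = 0 then 1 else 0 := by
  split_ifs with h
  · subst h
    have : ⇑(fourier (T := 2 * Real.pi) 0) = (fun _ => 1 : Cir → ℂ) := by
      ext1 t; exact fourier_zero
    rw [this, MeasureTheory.integral_const, probReal_univ, one_smul]
  · exact integral_eq_zero_of_add_right_eq_neg
      (fourier_add_half_inv_index h fact2pi.elim)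

lemma integrable_contMap (P : C(Tor, ℂ)) : Integrable P μ2 :=
  P.continuous.integrable_of_hasCompactSupport (HasCompactSupport.of_compactSpace _)

lemma integral_eChar (m n : ℤ) :
    (∫ p, eChar m n p ∂μ2) = if m = 0 ∧ n = 0 then 1 else 0 := by
  have : (∫ p, eChar m n p ∂μ2)
      = (∫ x : Cir, fourier m x ∂haarAddCircle) * (∫ y : Cir, fourier n y ∂haarAddCircle) := by
    simp_rw [eChar_apply, μ2]
    exact integral_prod_mul (fun x : Cir => fourier m x) (fun y : Cir => fourier n y)
  rw [this, integral_fourier, integral_fourier]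
  by_cases hm : m = 0 <;> by_cases hn : n = 0 <;> simp [hm, hn]

noncomputable def spaceAvg (P : C(Tor, ℂ)) : ℂ := ∫ p, P p ∂μ2

lemma spaceAvg_norm_le (P : C(Tor, ℂ)) : ‖spaceAvg P‖ ≤ ‖P‖ := by
  have := MeasureTheory.norm_integral_le_of_norm_le_const
    (μ := μ2) (f := fun p => P p) (C := ‖P‖)
    (Filter.Eventually.of_forall fun p => P.norm_coe_le_norm p)
  simpa [spaceAvg] using this

lemma spaceAvg_add (P Q : C(Tor, ℂ)) : spaceAvg (P + Q) = spaceAvg P + spaceAvg Q := by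
  simp only [spaceAvg, ContinuousMap.add_apply]
  exact integral_add (integrable_contMap P) (integrable_contMap Q)

lemma spaceAvg_smul (c : ℂ) (P : C(Tor, ℂ)) : spaceAvg (c • P) = c * spaceAvg P := by
  simp only [spaceAvg, ContinuousMap.smul_apply]
  rw [MeasureTheory.integral_smul, smul_eq_mul]

noncomputable def timeAvg (β b : ℝ) (P : C(Tor, ℂ)) : ℂ :=
  (1 / b : ℂ) * ∫ x in (0:ℝ)..b, P ((x : Cir), ((β * x : ℝ) : Cir))

lemma cont_orbit (β : ℝ) (P : C(Tor, ℂ)) :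
    Continuous fun x : ℝ => P ((x : Cir), ((β * x : ℝ) : Cir)) := by
  apply P.continuous.comp
  exact ((AddCircle.continuous_mk' _).comp continuous_id).prodMk
    ((AddCircle.continuous_mk' _).comp (continuous_const.mul continuous_id))

lemma timeAvg_add (β b : ℝ) (P Q : C(Tor, ℂ)) :
    timeAvg β b (P + Q) = timeAvg β b P + timeAvg β b Q := by
  simp only [timeAvg, ContinuousMap.add_apply]
  rw [intervalIntegral.integral_add ((cont_orbit β P).intervalIntegrable _ _)
    ((cont_orbit β Q).intervalIntegrable _ _), mul_add]

lemma timeAvg_smul (β b : ℝ) (c : ℂ) (P : C(Tor, ℂ)) :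
    timeAvg β b (c • P) = c * timeAvg β b P := by
  simp only [timeAvg, ContinuousMap.smul_apply, smul_eq_mul]
  rw [intervalIntegral.integral_const_mul]
  ring

lemma timeAvg_norm_le (β : ℝ) {b : ℝ} (hb : (1:ℝ) ≤ b) (P : C(Tor, ℂ)) :
    ‖timeAvg β b P‖ ≤ ‖P‖ := by
  have hb0 : (0:ℝ) < b := lt_of_lt_of_le one_pos hb
  have h1 : ‖∫ x in (0:ℝ)..b, P ((x : Cir), ((β * x : ℝ) : Cir))‖ ≤ ‖P‖ * |b - 0| := by
    apply intervalIntegral.norm_integral_le_of_norm_le_const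
    intro x _
    exact P.norm_coe_le_norm _
  have h2 : ‖timeAvg β b P‖ ≤ (1/b) * (‖P‖ * |b - 0|) := by
    rw [timeAvg, norm_mul]
    have : ‖(1 / b : ℂ)‖ = 1/b := by
      rw [norm_div, norm_one, Complex.norm_real]
      simp [abs_of_pos hb0]
    rw [this]
    apply mul_le_mul_of_nonneg_left h1 (by positivity)
  calc ‖timeAvg β b P‖ ≤ (1/b) * (‖P‖ * |b - 0|) := h2
    _ = ‖P‖ := by
        rw [sub_zero, abs_of_pos hb0]; field_simp

lemma fourier_coe_exp (n : ℤ) (x : ℝ) :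
    (fourier n ((x : ℝ) : Cir) : ℂ) = Complex.exp (Complex.I * (n * x)) := by
  rw [fourier_coe_apply]
  congr 1
  have hπ : (Real.pi : ℂ) ≠ 0 := Complex.ofReal_ne_zero.mpr Real.pi_ne_zero
  field_simp
  push_cast
  ring

lemma tendsto_timeAvg_eChar (β : ℝ) (hβ : Irrational β) (m n : ℤ) :
    Tendsto (fun b => timeAvg β b (eChar m n)) atTop (nhds (spaceAvg (eChar m n))) := by
  have horbit : ∀ x : ℝ, eChar m n ((x : Cir), ((β * x : ℝ) : Cir))
      = Complex.exp ((Complex.I * ((m : ℝ) + n * β)) * x) := by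
    intro x
    rw [eChar_apply, fourier_coe_exp, fourier_coe_exp, ← Complex.exp_add]
    push_cast
    ring_nf
  by_cases h : m = 0 ∧ n = 0
  · obtain ⟨rfl, rfl⟩ := h
    have hsp : spaceAvg (eChar 0 0) = 1 := by
      rw [spaceAvg, integral_eChar]; simp
    rw [hsp]
    have : ∀ b : ℝ, 1 ≤ b → timeAvg β b (eChar 0 0) = 1 := by
      intro b hb
      have hb0 : (0:ℝ) < b := lt_of_lt_of_le one_pos hb
      simp only [timeAvg]
      have : (fun x : ℝ => eChar 0 0 ((x : Cir), ((β * x : ℝ) : Cir)))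
          = fun _ : ℝ => (1:ℂ) := by
        funext x; rw [horbit]; push_cast; simp
      rw [this, intervalIntegral.integral_const, sub_zero]
      have hbne : (b:ℂ) ≠ 0 := by exact_mod_cast hb0.ne'
      simp [Complex.real_smul]
      field_simp
    apply Tendsto.congr' _ tendsto_const_nhds
    filter_upwards [eventually_ge_atTop (1:ℝ)] with b hb
    exact (this b hb).symm
  · -- nonzero character
    obtain ⟨c, hc⟩ : ∃ c : ℝ, c = (m : ℝ) + n * β := ⟨_, rfl⟩
    have hcne : c ≠ 0 := by
      intro h0
      rw [hc] at h0
      rcases eq_or_ne n 0 with hn | hn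
      · subst hn
        push_cast at h0
        have hm : (m : ℝ) = 0 := by linarith
        exact h (by constructor <;> [exact_mod_cast hm; rfl])
      · apply hβ
        refine ⟨-(m : ℚ) / (n : ℚ), ?_⟩
        have hn' : (n : ℝ) ≠ 0 := Int.cast_ne_zero.mpr hn
        push_cast
        field_simp
        linarith
    have hsp : spaceAvg (eChar m n) = 0 := by
      rw [spaceAvg, integral_eChar]; simp [h]
    rw [hsp]
    have hIc : Complex.I * (c : ℂ) ≠ 0 := by
      apply mul_ne_zero Complex.I_ne_zero
      exact_mod_cast hcne
    apply squeeze_zero_norm' (a := fun b : ℝ => (1/b) * (2 / ‖Complex.I * (c:ℂ)‖))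
    · filter_upwards [eventually_ge_atTop (1:ℝ)] with b hb
      have hb0 : (0:ℝ) < b := lt_of_lt_of_le one_pos hb
      have hint : (∫ x in (0:ℝ)..b, eChar m n ((x : Cir), ((β * x : ℝ) : Cir)))
          = (Complex.exp ((Complex.I * (c:ℂ)) * b) - Complex.exp ((Complex.I * (c:ℂ)) * 0))
            / (Complex.I * (c:ℂ)) := by
        rw [show (fun x : ℝ => eChar m n ((x : Cir), ((β * x : ℝ) : Cir)))
            = fun x : ℝ => Complex.exp ((Complex.I * (c:ℂ)) * x) by
          funext x; rw [horbit, hc]; congr 1; push_cast; ring]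
        exact integral_exp_mul_complex hIc
      have hnorm1 : ‖(1/b : ℂ)‖ = 1/b := by
        rw [norm_div, norm_one, Complex.norm_real]; simp [abs_of_pos hb0]
      rw [timeAvg, hint, norm_mul, hnorm1]
      apply mul_le_mul_of_nonneg_left _ (by positivity)
      rw [norm_div]
      gcongr
      · have hre : ∀ t : ℝ, ‖Complex.exp ((Complex.I * (c:ℂ)) * t)‖ = 1 := by
          intro t
          rw [Complex.norm_exp]
          simp [Complex.mul_re]
        calc ‖Complex.exp ((Complex.I * (c:ℂ)) * b) - Complex.exp ((Complex.I * (c:ℂ)) * 0)‖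
            ≤ ‖Complex.exp ((Complex.I * (c:ℂ)) * b)‖ + ‖Complex.exp ((Complex.I * (c:ℂ)) * 0)‖ :=
              norm_sub_le _ _
          _ = 2 := by rw [hre b]; simp; norm_num
    · have h0 : Tendsto (fun b : ℝ => 1/b) atTop (nhds 0) := by
        simpa only [one_div] using tendsto_inv_atTop_zero
      simpa using h0.mul_const (2 / ‖Complex.I * (c:ℂ)‖)

lemma tendsto_timeAvg_span (β : ℝ) (hβ : Irrational β) {P : C(Tor, ℂ)}
    (hP : P ∈ span ℂ (Set.range fun p : ℤ × ℤ => eChar p.1 p.2)) :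
    Tendsto (fun b => timeAvg β b P) atTop (nhds (spaceAvg P)) := by
  induction hP using Submodule.span_induction with
  | mem x hx =>
      obtain ⟨⟨m, n⟩, rfl⟩ := hx
      exact tendsto_timeAvg_eChar β hβ m n
  | zero =>
      have h1 : ∀ b : ℝ, timeAvg β b (0 : C(Tor, ℂ)) = 0 := by
        intro b; simp [timeAvg]
      have h2 : spaceAvg (0 : C(Tor, ℂ)) = 0 := by simp [spaceAvg]
      simp only [h1, h2]; exact tendsto_const_nhds
  | add x y hx hy ihx ihy =>
      simp only [timeAvg_add, spaceAvg_add]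
      exact ihx.add ihy
  | smul c x hx ihx =>
      simp only [timeAvg_smul, spaceAvg_smul]
      exact ihx.const_mul c

lemma timeAvg_sub (β b : ℝ) (P Q : C(Tor, ℂ)) :
    timeAvg β b (P - Q) = timeAvg β b P - timeAvg β b Q := by
  simp only [timeAvg, ContinuousMap.sub_apply]
  rw [intervalIntegral.integral_sub ((cont_orbit β P).intervalIntegrable _ _)
    ((cont_orbit β Q).intervalIntegrable _ _), mul_sub]

lemma spaceAvg_sub (P Q : C(Tor, ℂ)) : spaceAvg (P - Q) = spaceAvg P - spaceAvg Q := by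
  simp only [spaceAvg, ContinuousMap.sub_apply]
  exact integral_sub (integrable_contMap P) (integrable_contMap Q)

/-- The star subalgebra generated by the characters. -/
noncomputable def charAlg : StarSubalgebra ℂ C(Tor, ℂ) where
  toSubalgebra := Algebra.adjoin ℂ (Set.range fun p : ℤ × ℤ => eChar p.1 p.2)
  star_mem' := by
    show Algebra.adjoin ℂ (Set.range fun p : ℤ × ℤ => eChar p.1 p.2) ≤
      star (Algebra.adjoin ℂ (Set.range fun p : ℤ × ℤ => eChar p.1 p.2))
    refine Algebra.adjoin_le ?_
    rintro - ⟨⟨m, n⟩, rfl⟩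
    refine Algebra.subset_adjoin ⟨(-m, -n), ?_⟩
    ext p
    simp only [eChar_apply, ContinuousMap.star_apply, star_mul', Complex.star_def]
    rw [fourier_neg, fourier_neg]

lemma charAlg_coe : Subalgebra.toSubmodule charAlg.toSubalgebra
    = span ℂ (Set.range fun p : ℤ × ℤ => eChar p.1 p.2) := by
  apply Algebra.adjoin_eq_span_of_subset
  refine Subset.trans ?_ Submodule.subset_span
  intro x hx
  refine Submonoid.closure_induction (fun _ => id) ⟨((0:ℤ), (0:ℤ)), ?_⟩ ?_ hx
  · ext p
    simp only [eChar_apply]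
    rw [fourier_zero, fourier_zero, one_mul]
    rfl
  · rintro - - - - ⟨⟨m₁, n₁⟩, rfl⟩ ⟨⟨m₂, n₂⟩, rfl⟩
    refine ⟨(m₁ + m₂, n₁ + n₂), ?_⟩
    ext p
    simp only [eChar_apply, ContinuousMap.mul_apply]
    rw [fourier_add, fourier_add]
    ring

lemma charAlg_separates : charAlg.SeparatesPoints := by
  intro x y hxy
  rcases ne_or_eq x.1 y.1 with h1 | h1
  · refine ⟨_, ⟨eChar 1 0, Algebra.subset_adjoin ⟨((1:ℤ), (0:ℤ)), rfl⟩, rfl⟩, ?_⟩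
    simp only [eChar_apply, fourier_zero, mul_one, fourier_one]
    intro hcontra
    rw [Circle.coe_inj] at hcontra
    exact h1 (injective_toCircle fact2pi.elim.ne' hcontra)
  · have h2 : x.2 ≠ y.2 := by
      intro h2
      exact hxy (Prod.ext h1 h2)
    refine ⟨_, ⟨eChar 0 1, Algebra.subset_adjoin ⟨((0:ℤ), (1:ℤ)), rfl⟩, rfl⟩, ?_⟩
    simp only [eChar_apply, fourier_zero, one_mul, fourier_one]
    intro hcontra
    rw [Circle.coe_inj] at hcontra
    exact h2 (injective_toCircle fact2pi.elim.ne' hcontra)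

lemma charAlg_closure_top : charAlg.topologicalClosure = ⊤ :=
  ContinuousMap.starSubalgebra_topologicalClosure_eq_top_of_separatesPoints _ charAlg_separates

lemma span_char_closure_top :
    (span ℂ (Set.range fun p : ℤ × ℤ => eChar p.1 p.2)).topologicalClosure = ⊤ := by
  rw [← charAlg_coe]
  exact congr_arg (Subalgebra.toSubmodule <| StarSubalgebra.toSubalgebra ·) charAlg_closure_top

lemma exists_approx (G : C(Tor, ℂ)) {ε : ℝ} (hε : 0 < ε) :
    ∃ P ∈ span ℂ (Set.range fun p : ℤ × ℤ => eChar p.1 p.2), ‖G - P‖ < ε := by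
  have hG : G ∈ closure ((span ℂ (Set.range fun p : ℤ × ℤ => eChar p.1 p.2) : Submodule ℂ _) :
      Set C(Tor, ℂ)) := by
    have : G ∈ (span ℂ (Set.range fun p : ℤ × ℤ => eChar p.1 p.2)).topologicalClosure := by
      rw [span_char_closure_top]; trivial
    exact this
  obtain ⟨P, hPmem, hPd⟩ := Metric.mem_closure_iff.mp hG ε hε
  exact ⟨P, hPmem, by rwa [dist_eq_norm] at hPd⟩

/-- Main equidistribution result at the level of the 2-torus. -/
theorem tendsto_timeAvg (β : ℝ) (hβ : Irrational β) (G : C(Tor, ℂ)) :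
    Tendsto (fun b => timeAvg β b G) atTop (nhds (spaceAvg G)) := by
  rw [Metric.tendsto_atTop]
  intro ε hε
  obtain ⟨P, hPmem, hPnorm⟩ := exists_approx G (show (0:ℝ) < ε/4 by linarith)
  have hP := tendsto_timeAvg_span β hβ hPmem
  rw [Metric.tendsto_atTop] at hP
  obtain ⟨N, hN⟩ := hP (ε/4) (by linarith)
  refine ⟨max N 1, fun b hb => ?_⟩
  have hb1 : (1:ℝ) ≤ b := le_trans (le_max_right _ _) hb
  have hbN : N ≤ b := le_trans (le_max_left _ _) hb
  have key1 : dist (timeAvg β b G) (timeAvg β b P) ≤ ‖G - P‖ := by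
    rw [dist_eq_norm, ← timeAvg_sub]
    exact timeAvg_norm_le β hb1 _
  have key3 : dist (spaceAvg P) (spaceAvg G) ≤ ‖G - P‖ := by
    rw [dist_eq_norm, ← spaceAvg_sub]
    calc ‖spaceAvg (P - G)‖ ≤ ‖P - G‖ := spaceAvg_norm_le _
      _ = ‖G - P‖ := norm_sub_rev _ _
  calc dist (timeAvg β b G) (spaceAvg G)
      ≤ dist (timeAvg β b G) (timeAvg β b P) + dist (timeAvg β b P) (spaceAvg P)
        + dist (spaceAvg P) (spaceAvg G) := dist_triangle4 _ _ _ _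
    _ < ε/4 + ε/4 + ε/4 := by
        have h2 := hN b hbN
        have h1 := lt_of_le_of_lt key1 hPnorm
        have h3 := lt_of_le_of_lt key3 hPnorm
        linarith
    _ < ε := by linarith

lemma haar_integral_eq (Q : Cir → ℂ) :
    (∫ t, Q t ∂haarAddCircle) = (1/(2*Real.pi) : ℝ) • ∫ v in (0:ℝ)..(2*Real.pi), Q ↑v := by
  have h1 : ∫ v in (0:ℝ)..(0+2*Real.pi), Q ↑v = ∫ b, Q b ∂(volume : Measure Cir) :=
    AddCircle.intervalIntegral_preimage (2*Real.pi) 0 Q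
  rw [volume_eq_smul_haarAddCircle, MeasureTheory.integral_smul_measure,
    ENNReal.toReal_ofReal (by positivity : (0:ℝ) ≤ 2*Real.pi), zero_add] at h1
  rw [h1, smul_smul, one_div, inv_mul_cancel₀ (by positivity : (2*Real.pi) ≠ 0), one_smul]

lemma spaceAvg_eq (P : C(Tor, ℂ)) :
    spaceAvg P = (1/(2*Real.pi)^2 : ℝ) •
      ∫ u in (0:ℝ)..(2*Real.pi), ∫ v in (0:ℝ)..(2*Real.pi), P (↑u, ↑v) := by
  have h0 : spaceAvg P = ∫ x : Cir, (∫ y : Cir, P (x, y) ∂haarAddCircle) ∂haarAddCircle := by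
    rw [spaceAvg, μ2]
    exact MeasureTheory.integral_prod _ (integrable_contMap P)
  rw [h0]
  have h1 : ∀ x : Cir, (∫ y : Cir, P (x, y) ∂haarAddCircle)
      = (1/(2*Real.pi) : ℝ) • ∫ v in (0:ℝ)..(2*Real.pi), P (x, ↑v) :=
    fun x => haar_integral_eq _
  simp_rw [h1]
  rw [MeasureTheory.integral_smul, haar_integral_eq (fun x => ∫ v in (0:ℝ)..(2*Real.pi), P (x, ↑v)),
    smul_smul]
  congr 1
  ring

lemma fourier_one_coe (x : ℝ) :
    (fourier 1 ((x : ℝ) : Cir) : ℂ) = Complex.exp ((x : ℂ) * Complex.I) := by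
  rw [fourier_coe_exp]
  congr 1
  push_cast
  ring

end WeakConvAuxT

/-- The law of `3 + 2Y_b` converges weakly, as `b → ∞`, to the law of the random
eigenvalue `T` of the triangular lattice with loops, namely the law of
`|e^{iφ₁}+e^{iφ₂}+e^{iφ₃}|²` for independent uniform angles `φ₁,φ₂,φ₃` on `[0,2π]`. -/
theorem weak_convergence_to_random_eigenvalue_T
    (β : ℝ) (hβpos : 0 < β) (hβirr : Irrational β)
    (f : ℝ → ℝ) (hf : Continuous f) (hbdd : ∃ C : ℝ, ∀ y : ℝ, |f y| ≤ C) :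
    Tendsto (fun b : ℝ =>
        (1 / b) * ∫ x in (0:ℝ)..b,
          f (3 + 2 * (Real.cos x + Real.cos (β * x) + Real.cos ((1 + β) * x))))
      atTop
      (nhds ((1 / (2 * π) ^ 3) *
        ∫ φ₁ in (0:ℝ)..(2 * π), ∫ φ₂ in (0:ℝ)..(2 * π), ∫ φ₃ in (0:ℝ)..(2 * π),
          f (‖Complex.exp (φ₁ * Complex.I) + Complex.exp (φ₂ * Complex.I) +
            Complex.exp (φ₃ * Complex.I)‖ ^ 2))) := by
  classical
  haveI : Fact ((0:ℝ) < 2*Real.pi) := ⟨by positivity⟩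
  have habs : ∀ a b c : ℝ,
      (‖Complex.exp (a * Complex.I) + Complex.exp (b * Complex.I) +
        Complex.exp (c * Complex.I)‖ ^ 2)
      = 3 + 2*(Real.cos (a-b) + Real.cos (b-c) + Real.cos (a-c)) := by
    intro a b c
    rw [Complex.sq_norm, Complex.normSq_apply]
    simp only [Complex.add_re, Complex.add_im, Complex.exp_ofReal_mul_I_re,
      Complex.exp_ofReal_mul_I_im]
    rw [Real.cos_sub, Real.cos_sub, Real.cos_sub]
    linear_combination Real.sin_sq_add_cos_sq a + Real.sin_sq_add_cos_sq b +
      Real.sin_sq_add_cos_sq c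
  set g : ℝ → ℝ → ℝ := fun u v => f (3 + 2*(Real.cos u + Real.cos v + Real.cos (u+v)))
    with hg
  have hper : ∀ u, Function.Periodic (g u) (2*Real.pi) := by
    intro u v
    simp only [hg]
    rw [Real.cos_add_two_pi, show u + (v + 2*Real.pi) = (u+v) + 2*Real.pi by ring,
      Real.cos_add_two_pi]
  have hperu : ∀ v u, g (u + 2*Real.pi) v = g u v := by
    intro v u
    simp only [hg]
    rw [Real.cos_add_two_pi, show (u + 2*Real.pi) + v = (u+v) + 2*Real.pi by ring,
      Real.cos_add_two_pi]
  -- inner reduction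
  have hinner : ∀ φ₁ φ₂ : ℝ,
      (∫ φ₃ in (0:ℝ)..(2*π), f (‖Complex.exp (φ₁ * Complex.I) +
        Complex.exp (φ₂ * Complex.I) + Complex.exp (φ₃ * Complex.I)‖ ^ 2))
      = ∫ v in (0:ℝ)..(2*π), g (φ₁ - φ₂) v := by
    intro φ₁ φ₂
    have hpt : ∀ φ₃ : ℝ, f (‖Complex.exp (φ₁ * Complex.I) +
        Complex.exp (φ₂ * Complex.I) + Complex.exp (φ₃ * Complex.I)‖ ^ 2)
        = g (φ₁ - φ₂) (φ₂ - φ₃) := by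
      intro φ₃
      rw [habs]
      simp only [hg]
      rw [show (φ₁ - φ₂) + (φ₂ - φ₃) = φ₁ - φ₃ by ring]
    simp only [hpt]
    rw [intervalIntegral.integral_comp_sub_left (g (φ₁ - φ₂)) φ₂, sub_zero]
    have h2 := (hper (φ₁ - φ₂)).intervalIntegral_add_eq (φ₂ - (2*π)) 0
    rw [sub_add_cancel, zero_add] at h2
    exact h2
  have hmid : ∀ φ₁ : ℝ,
      (∫ φ₂ in (0:ℝ)..(2*π), ∫ φ₃ in (0:ℝ)..(2*π),
        f (‖Complex.exp (φ₁ * Complex.I) + Complex.exp (φ₂ * Complex.I) +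
          Complex.exp (φ₃ * Complex.I)‖ ^ 2))
      = ∫ u in (0:ℝ)..(2*π), ∫ v in (0:ℝ)..(2*π), g u v := by
    intro φ₁
    simp only [hinner]
    rw [intervalIntegral.integral_comp_sub_left
      (fun u => ∫ v in (0:ℝ)..(2*π), g u v) φ₁, sub_zero]
    have hperH : Function.Periodic (fun u => ∫ v in (0:ℝ)..(2*π), g u v) (2*π) := by
      intro u
      simp only [hperu]
    have h2 := hperH.intervalIntegral_add_eq (φ₁ - (2*π)) 0
    rw [sub_add_cancel, zero_add] at h2
    exact h2
  have htriple :
      (∫ φ₁ in (0:ℝ)..(2 * π), ∫ φ₂ in (0:ℝ)..(2 * π), ∫ φ₃ in (0:ℝ)..(2 * π),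
        f (‖Complex.exp (φ₁ * Complex.I) + Complex.exp (φ₂ * Complex.I) +
          Complex.exp (φ₃ * Complex.I)‖ ^ 2))
      = (2*π) * ∫ u in (0:ℝ)..(2*π), ∫ v in (0:ℝ)..(2*π), g u v := by
    simp only [hmid]
    rw [intervalIntegral.integral_const, sub_zero, smul_eq_mul]
  -- the continuous map on the torus
  have hGc : Continuous fun p : WeakConvAuxT.Tor => ((f (3 + 2*(((fourier 1 p.1 : ℂ)).re +
      ((fourier 1 p.2 : ℂ)).re + ((fourier 1 (p.1 + p.2) : ℂ)).re)) : ℝ) : ℂ) := by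
    apply Complex.continuous_ofReal.comp
    apply hf.comp
    have c1 : Continuous fun p : WeakConvAuxT.Tor => (fourier 1 p.1 : ℂ) :=
      (fourier 1).continuous.comp continuous_fst
    have c2 : Continuous fun p : WeakConvAuxT.Tor => (fourier 1 p.2 : ℂ) :=
      (fourier 1).continuous.comp continuous_snd
    have c3 : Continuous fun p : WeakConvAuxT.Tor => (fourier 1 (p.1 + p.2) : ℂ) :=
      (fourier 1).continuous.comp (continuous_fst.add continuous_snd)
    exact continuous_const.add (continuous_const.mul
      (((Complex.continuous_re.comp c1).add (Complex.continuous_re.comp c2)).add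
        (Complex.continuous_re.comp c3)))
  set G : C(WeakConvAuxT.Tor, ℂ) := ⟨_, hGc⟩ with hGdef
  have hGval : ∀ u v : ℝ, G (((u:ℝ) : WeakConvAuxT.Cir), ((v:ℝ) : WeakConvAuxT.Cir))
      = ((g u v : ℝ) : ℂ) := by
    intro u v
    simp only [hGdef, ContinuousMap.coe_mk]
    rw [← AddCircle.coe_add, WeakConvAuxT.fourier_one_coe, WeakConvAuxT.fourier_one_coe,
      WeakConvAuxT.fourier_one_coe]
    simp only [Complex.exp_ofReal_mul_I_re]
    rfl
  have hLHS : ∀ b : ℝ, WeakConvAuxT.timeAvg β b G =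
      (((1 / b) * ∫ x in (0:ℝ)..b, f (3 + 2*(Real.cos x + Real.cos (β*x) +
        Real.cos ((1+β)*x))) : ℝ) : ℂ) := by
    intro b
    rw [WeakConvAuxT.timeAvg]
    have hpt : ∀ x : ℝ, G (((x:ℝ) : WeakConvAuxT.Cir), ((β*x : ℝ) : WeakConvAuxT.Cir)) =
        ((f (3 + 2*(Real.cos x + Real.cos (β*x) + Real.cos ((1+β)*x))) : ℝ) : ℂ) := by
      intro x
      rw [hGval]
      simp only [hg]
      rw [show x + β*x = (1+β)*x by ring]
    simp only [hpt]
    rw [intervalIntegral.integral_ofReal]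
    push_cast
    ring
  have hSA : WeakConvAuxT.spaceAvg G =
      (((1/(2*π)^2) * ∫ u in (0:ℝ)..(2*π), ∫ v in (0:ℝ)..(2*π), g u v : ℝ) : ℂ) := by
    rw [WeakConvAuxT.spaceAvg_eq]
    have hin : ∀ u : ℝ, (∫ v in (0:ℝ)..(2*π),
        G (((u:ℝ) : WeakConvAuxT.Cir), ((v:ℝ) : WeakConvAuxT.Cir)))
        = (((∫ v in (0:ℝ)..(2*π), g u v : ℝ)) : ℂ) := by
      intro u
      simp only [hGval]
      exact intervalIntegral.integral_ofReal
    simp only [hin]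
    rw [intervalIntegral.integral_ofReal, Complex.real_smul]
    push_cast
    ring
  have hmain := WeakConvAuxT.tendsto_timeAvg β hβirr G
  rw [hSA] at hmain
  have hmain' : Tendsto (fun b : ℝ => (((1 / b) * ∫ x in (0:ℝ)..b,
      f (3 + 2*(Real.cos x + Real.cos (β*x) + Real.cos ((1+β)*x))) : ℝ) : ℂ)) atTop
      (nhds (((1/(2*π)^2) * ∫ u in (0:ℝ)..(2*π), ∫ v in (0:ℝ)..(2*π), g u v : ℝ) : ℂ)) :=
    hmain.congr hLHS
  have hre := (Complex.continuous_re.tendsto _).comp hmain'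
  simp only [Function.comp_def, Complex.ofReal_re] at hre
  have hconst : (1 / (2 * π) ^ 3) *
      (∫ φ₁ in (0:ℝ)..(2 * π), ∫ φ₂ in (0:ℝ)..(2 * π), ∫ φ₃ in (0:ℝ)..(2 * π),
        f (‖Complex.exp (φ₁ * Complex.I) + Complex.exp (φ₂ * Complex.I) +
          Complex.exp (φ₃ * Complex.I)‖ ^ 2))
      = (1/(2*π)^2) * ∫ u in (0:ℝ)..(2*π), ∫ v in (0:ℝ)..(2*π), g u v := by
    rw [htriple]
    have hπ : (2*π) ≠ 0 := by positivity
    field_simp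
  rw [hconst]
  exact hre
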